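/- Let f : ℕ → ℂ, let c > 0 be real, and let z ∈ ℂ be such that the series ∑_{n≥0} |f_n| (|z|/c)^n converges. Then the exponential generating function value ∑_{n≥0} f_n z^n / n! equals lim_{T→∞} (1/(2π)) ∫_{-T}^{T} (e^{c + i t} / (c + i t)) · F(z/(c + i t)) dt, where F(w) = ∑_{n≥0} f_n w^n (this series converges absolutely at every argument z/(c+it) since |z/(c+it)| ≤ |z|/c), and the improper integral is interpreted as the limit of integrals over the symmetric intervals [-T, T]. -/

import Mathlib

open MeasureTheory Filter intervalIntegral

open Set Complex Real Topology FourierTransform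


lemma aux_key {r x : ℝ} (hr : 0 < r) (hx : 0 < x) :
    x * Real.exp (-(r * x)) ≤ (2 / r) * Real.exp (-(r / 2) * x) := by
  have h1 : x ≤ (2 / r) * Real.exp (r / 2 * x) := by
    have h2r : (0:ℝ) < 2 / r := by positivity
    calc x = (2 / r) * (r / 2 * x) := by field_simp
      _ ≤ (2 / r) * Real.exp (r / 2 * x) := by
          apply mul_le_mul_of_nonneg_left _ h2r.le
          nlinarith [Real.add_one_le_exp (r / 2 * x)]
  calc x * Real.exp (-(r * x)) ≤ ((2 / r) * Real.exp (r / 2 * x)) * Real.exp (-(r * x)) :=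
        mul_le_mul_of_nonneg_right h1 (Real.exp_pos _).le
    _ = (2 / r) * Real.exp (-(r / 2) * x) := by
        rw [mul_assoc, ← Real.exp_add]; ring_nf

lemma aux_integrableOn (a : ℂ) (ha : 0 < a.re) :
    IntegrableOn (fun x : ℝ => (x : ℂ) * Complex.exp (-(a * x))) (Ioi 0) := by
  have h2 : IntegrableOn (fun x : ℝ => (2 / a.re) * Real.exp (-(a.re / 2) * x)) (Ioi 0) :=
    (exp_neg_integrableOn_Ioi 0 (by positivity)).const_mul _
  refine Integrable.mono h2 ?_ ?_
  · exact (Complex.continuous_ofReal.mul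
      (Complex.continuous_exp.comp (by continuity))).aestronglyMeasurable.restrict
  · filter_upwards [ae_restrict_mem measurableSet_Ioi] with x hx
    simp only [mem_Ioi] at hx
    rw [norm_mul, Complex.norm_exp, Complex.norm_real, Real.norm_eq_abs,
      abs_of_pos hx]
    have hre : (-(a * x)).re = -(a.re * x) := by simp
    rw [hre]
    calc x * Real.exp (-(a.re * x)) ≤ (2 / a.re) * Real.exp (-(a.re / 2) * x) := aux_key ha hx
      _ ≤ ‖(2 / a.re) * Real.exp (-(a.re / 2) * x)‖ := le_abs_self _

lemma aux_integral (a : ℂ) (ha : 0 < a.re) :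
    ∫ x in Ioi (0:ℝ), (x : ℂ) * Complex.exp (-(a * x)) = 1 / a ^ 2 := by
  have ha0 : a ≠ 0 := fun h => by simp [h] at ha
  set F : ℝ → ℂ := fun x => -((x / a + 1 / a ^ 2) * Complex.exp (-(a * x))) with hF
  have hderiv : ∀ x ∈ Ici (0:ℝ), HasDerivAt F ((x : ℂ) * Complex.exp (-(a * x))) x := by
    intro x _
    have h1 : HasDerivAt (fun x : ℝ => ((x : ℂ) / a + 1 / a ^ 2)) (1 / a) x := by
      have h : HasDerivAt (fun x : ℝ => (x : ℂ)) 1 x := by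
        simpa using (hasDerivAt_id x).ofReal_comp
      exact (h.div_const a).add_const (1 / a ^ 2)
    have h2 : HasDerivAt (fun x : ℝ => Complex.exp (-(a * x))) (-a * Complex.exp (-(a * x))) x := by
      have h3 : HasDerivAt (fun x : ℝ => -(a * (x : ℂ))) (-a) x := by
        exact (((hasDerivAt_id x).ofReal_comp).const_mul a).neg.congr_deriv (by simp)
      simpa [mul_comm] using h3.cexp
    have := (h1.mul h2).neg
    refine this.congr_deriv ?_
    field_simp
    ring
  have htend : Tendsto F atTop (𝓝 0) := by
    have hx : Tendsto (fun x : ℝ => x * Real.exp (-a.re * x)) atTop (𝓝 0) := by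
      simpa using tendsto_rpow_mul_exp_neg_mul_atTop_nhds_zero 1 a.re ha
    have he : Tendsto (fun x : ℝ => Real.exp (-a.re * x)) atTop (𝓝 0) := by
      have h0 : Tendsto (fun x : ℝ => a.re * x) atTop atTop :=
        Tendsto.const_mul_atTop ha tendsto_id
      simpa [Function.comp_def, neg_mul] using Real.tendsto_exp_neg_atTop_nhds_zero.comp h0
    have hsum : Tendsto (fun x : ℝ => (1 / ‖a‖) * (x * Real.exp (-a.re * x)) +
        (1 / ‖a‖ ^ 2) * Real.exp (-a.re * x)) atTop (𝓝 0) := by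
      have := (hx.const_mul (1 / ‖a‖)).add (he.const_mul (1 / ‖a‖ ^ 2))
      simpa using this
    apply squeeze_zero_norm' _ hsum
    filter_upwards [eventually_ge_atTop (0:ℝ)] with x hx0
    have hnorm : ‖F x‖ = ‖(x : ℂ) / a + 1 / a ^ 2‖ * Real.exp (-a.re * x) := by
      rw [hF]
      simp only [norm_neg, norm_mul, Complex.norm_exp]
      congr 2
      simp
    rw [hnorm]
    have hb : ‖(x : ℂ) / a + 1 / a ^ 2‖ ≤ 1 / ‖a‖ * x + 1 / ‖a‖ ^ 2 := by
      refine (norm_add_le _ _).trans ?_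
      have h1 : ‖(x : ℂ) / a‖ = x / ‖a‖ := by
        rw [norm_div, Complex.norm_real, Real.norm_of_nonneg hx0]
      have h2 : ‖(1 : ℂ) / a ^ 2‖ = 1 / ‖a‖ ^ 2 := by
        rw [norm_div, norm_pow, norm_one]
      rw [h1, h2]
      apply add_le_add_left
      rw [div_eq_mul_inv, one_div, mul_comm]
    calc ‖(x : ℂ) / a + 1 / a ^ 2‖ * Real.exp (-a.re * x)
        ≤ (1 / ‖a‖ * x + 1 / ‖a‖ ^ 2) * Real.exp (-a.re * x) :=
          mul_le_mul_of_nonneg_right hb (Real.exp_pos _).le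
      _ = 1 / ‖a‖ * (x * Real.exp (-a.re * x)) + 1 / ‖a‖ ^ 2 * Real.exp (-a.re * x) := by ring
  have := integral_Ioi_of_hasDerivAt_of_tendsto
    (hderiv 0 self_mem_Ici).continuousAt.continuousWithinAt
    (fun x hx => hderiv x hx.out.le) (aux_integrableOn a ha) htend
  rw [this, hF]
  simp




lemma abs_cI (c t : ℝ) : ‖(c:ℂ) + Complex.I * t‖ ^ 2 = c ^ 2 + t ^ 2 := by
  rw [← Complex.normSq_eq_norm_sq]
  simp [Complex.normSq_apply]
  ring

lemma cI_ne (c : ℝ) (hc : 0 < c) (t : ℝ) : (c:ℂ) + Complex.I * t ≠ 0 := by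
  intro h
  have : ((c:ℂ) + Complex.I * t).re = 0 := by rw [h]; simp
  simp at this
  exact hc.ne' this

lemma aux_J2 (c : ℝ) (hc : 0 < c) :
    ∫ t : ℝ, Complex.exp ((c:ℂ) + Complex.I * t) / ((c:ℂ) + Complex.I * t) ^ 2
      = 2 * Real.pi := by
  set g : ℝ → ℂ := (Ioi (0:ℝ)).indicator (fun x : ℝ => (x:ℂ) * Complex.exp (-((c:ℂ) * x))) with hg
  have hcre : (0:ℝ) < ((c:ℂ)).re := by simpa using hc
  have hg_int : Integrable g :=
    (integrable_indicator_iff measurableSet_Ioi).2 (aux_integrableOn _ hcre)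
  have hFg : ∀ ξ : ℝ, 𝓕 g ξ = 1 / ((c:ℂ) + (2 * π * ξ) * Complex.I) ^ 2 := by
    intro ξ
    rw [Real.fourier_eq']
    have : ∀ v : ℝ, Complex.exp (↑(-2 * π * (inner ℝ v ξ : ℝ)) * Complex.I) • g v
        = (Ioi (0:ℝ)).indicator
            (fun x : ℝ => (x:ℂ) * Complex.exp (-((((c:ℂ) + (2 * π * ξ) * Complex.I)) * x))) v := by
      intro v
      by_cases hv : v ∈ Ioi (0:ℝ)
      · rw [hg, indicator_of_mem hv, indicator_of_mem hv]
        simp only [smul_eq_mul, RCLike.inner_apply, conj_trivial]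
        rw [mul_left_comm, ← Complex.exp_add]
        congr 2
        push_cast
        ring
      · rw [hg, indicator_of_notMem hv, indicator_of_notMem hv, smul_zero]
    rw [funext this, MeasureTheory.integral_indicator measurableSet_Ioi,
      aux_integral _ (by simpa using hc)]
  have hFg_int : Integrable (𝓕 g) := by
    set m : ℝ := min (c ^ 2) 1 with hm
    have hm0 : 0 < m := lt_min (by positivity) one_pos
    refine (Integrable.mono ((integrable_inv_one_add_sq).const_mul m⁻¹) ?_ ?_)
    · have hcont2 : Continuous fun ξ : ℝ => (1:ℂ) / ((c:ℂ) + (2 * π * ξ) * Complex.I) ^ 2 := by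
        refine continuous_const.div ?_ fun ξ => pow_ne_zero 2 fun h => ?_
        · continuity
        · have : ((c:ℂ) + (2 * π * ξ) * Complex.I).re = 0 := by rw [h]; simp
          simp at this
          exact hc.ne' this
      exact hcont2.aestronglyMeasurable.congr
        (Filter.Eventually.of_forall fun ξ => (hFg ξ).symm)
    · refine Filter.Eventually.of_forall fun ξ => ?_
      rw [hFg]
      have habs : ‖(c:ℂ) + (2 * π * ξ) * Complex.I‖ ^ 2 = c ^ 2 + (2 * π * ξ) ^ 2 := by
        rw [← Complex.normSq_eq_norm_sq]
        simp [Complex.normSq_apply]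
        ring
      have h1 : ‖(1:ℂ) / ((c:ℂ) + (2 * π * ξ) * Complex.I) ^ 2‖
          = 1 / (c ^ 2 + (2 * π * ξ) ^ 2) := by
        rw [norm_div, norm_one, norm_pow, habs]
      rw [h1]
      have hpi : (1:ℝ) ≤ (2 * π) ^ 2 := by nlinarith [Real.pi_gt_three]
      have hge : m * (1 + ξ ^ 2) ≤ c ^ 2 + (2 * π * ξ) ^ 2 := by
        have h2 : m ≤ c ^ 2 := min_le_left _ _
        have h3 : m ≤ 1 := min_le_right _ _
        have h4 : m * ξ ^ 2 ≤ (2 * π * ξ) ^ 2 := by nlinarith [sq_nonneg ξ]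
        nlinarith
      have : (1:ℝ) / (c ^ 2 + (2 * π * ξ) ^ 2) ≤ m⁻¹ * (1 + ξ ^ 2)⁻¹ := by
        rw [one_div, ← mul_inv]
        exact inv_anti₀ (by positivity) hge
      refine this.trans ?_
      rw [Real.norm_eq_abs]
      exact le_abs_self _
  have hcont : ContinuousAt g 1 := by
    have : (fun x : ℝ => (x:ℂ) * Complex.exp (-((c:ℂ) * x))) =ᶠ[𝓝 (1:ℝ)] g := by
      filter_upwards [Ioi_mem_nhds (by norm_num : (0:ℝ) < 1)] with x hx
      rw [hg, indicator_of_mem hx]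
    exact ContinuousAt.congr (by fun_prop) this
  have hinv := hg_int.fourierInv_fourier_eq hFg_int hcont
  -- 𝓕⁻ (𝓕 g) 1 = ∫ ξ, exp(2πξ i) / (c + 2πξ i)^2
  rw [Real.fourierInv_eq'] at hinv
  have heq : ∀ ξ : ℝ, Complex.exp (↑(2 * π * (inner ℝ ξ (1:ℝ) : ℝ)) * Complex.I) • 𝓕 g ξ
      = Complex.exp (((2 * π * ξ : ℝ) : ℂ) * Complex.I) / ((c:ℂ) + (2 * π * ξ) * Complex.I) ^ 2 := by
    intro ξ
    rw [hFg ξ]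
    simp only [smul_eq_mul, RCLike.inner_apply, conj_trivial, mul_one]
    ring
  rw [funext heq] at hinv
  have hg1 : g 1 = Complex.exp (-(c:ℂ)) := by
    rw [hg, indicator_of_mem (by norm_num : (1:ℝ) ∈ Ioi 0)]
    simp
  -- change of variables t = 2πξ
  set h : ℝ → ℂ := fun t => Complex.exp ((t:ℂ) * Complex.I) / ((c:ℂ) + t * Complex.I) ^ 2 with hh
  have hcv : ∫ ξ : ℝ, h (2 * π * ξ) = |(2 * π : ℝ)⁻¹| • ∫ t : ℝ, h t :=
    MeasureTheory.Measure.integral_comp_mul_left h (2 * π)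
  have hinv' : ∫ ξ : ℝ, h (2 * π * ξ) = Complex.exp (-(c:ℂ)) := by
    rw [← hg1, ← hinv]
    congr 1 with ξ
    rw [hh]
    push_cast
    ring_nf
  have hpi0 : (0:ℝ) < 2 * π := by positivity
  have hint_h : ∫ t : ℝ, h t = 2 * π * Complex.exp (-(c:ℂ)) := by
    rw [hinv', abs_of_pos (by positivity)] at hcv
    calc ∫ t : ℝ, h t = (2 * π : ℝ) • ((2 * π : ℝ)⁻¹ • ∫ t : ℝ, h t) := by
          rw [smul_smul, mul_inv_cancel₀ hpi0.ne', one_smul]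
      _ = (2 * π : ℝ) • Complex.exp (-(c:ℂ)) := by rw [← hcv]
      _ = 2 * π * Complex.exp (-(c:ℂ)) := by
          rw [Complex.real_smul]; push_cast; ring
  have hfinal : ∀ t : ℝ, Complex.exp ((c:ℂ) + Complex.I * t) / ((c:ℂ) + Complex.I * t) ^ 2
      = Complex.exp (c:ℂ) * h t := by
    intro t
    rw [hh, Complex.exp_add]
    ring_nf
  rw [funext hfinal, MeasureTheory.integral_const_mul, hint_h,
    show Complex.exp (c:ℂ) * (2 * ↑π * Complex.exp (-(c:ℂ)))
      = 2 * ↑π * (Complex.exp (c:ℂ) * Complex.exp (-(c:ℂ))) from by ring,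
    ← Complex.exp_add]
  simp




noncomputable def Sc (c : ℝ) (t : ℝ) : ℂ := (c:ℂ) + Complex.I * t
noncomputable def Gc (c : ℝ) (n : ℕ) (t : ℝ) : ℂ := Complex.exp (Sc c t) / (Sc c t) ^ (n + 1)
noncomputable def Jc (c : ℝ) (n : ℕ) (T : ℝ) : ℂ := ∫ t in (-T)..T, Gc c n t

lemma Sc_re (c t : ℝ) : (Sc c t).re = c := by simp [Sc]
lemma Sc_ne {c : ℝ} (hc : 0 < c) (t : ℝ) : Sc c t ≠ 0 := fun h => by
  have := Sc_re c t; rw [h] at this; simp at this; exact hc.ne' this.symm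
lemma Sc_cont (c : ℝ) : Continuous (Sc c) := by unfold Sc; continuity
lemma abs_Sc_sq (c t : ℝ) : ‖Sc c t‖ ^ 2 = c ^ 2 + t ^ 2 := by
  rw [← Complex.normSq_eq_norm_sq]; simp [Sc, Complex.normSq_apply]; ring
lemma c_le_abs_Sc {c : ℝ} (hc : 0 < c) (t : ℝ) : c ≤ ‖Sc c t‖ := by
  have := Complex.abs_re_le_norm (Sc c t); rwa [Sc_re, abs_of_pos hc] at this
lemma t_le_abs_Sc (c t : ℝ) : |t| ≤ ‖Sc c t‖ := by
  have := Complex.abs_im_le_norm (Sc c t)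
  have him : (Sc c t).im = t := by simp [Sc]
  rwa [him] at this
lemma Gc_cont {c : ℝ} (hc : 0 < c) (n : ℕ) : Continuous (Gc c n) := by
  unfold Gc
  exact (Complex.continuous_exp.comp (Sc_cont c)).div ((Sc_cont c).pow _)
    (fun t => pow_ne_zero _ (Sc_ne hc t))
lemma norm_Gc {c : ℝ} (n : ℕ) (t : ℝ) :
    ‖Gc c n t‖ = Real.exp c / ‖Sc c t‖ ^ (n + 1) := by
  rw [Gc, norm_div, norm_pow, Complex.norm_exp, Sc_re]
lemma norm_Gc_le {c : ℝ} (hc : 0 < c) (n : ℕ) (t : ℝ) :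
    ‖Gc c n t‖ ≤ Real.exp c / c ^ (n + 1) := by
  rw [norm_Gc]
  apply div_le_div_of_nonneg_left (Real.exp_pos c).le (by positivity)
  exact pow_le_pow_left₀ hc.le (c_le_abs_Sc hc t) _
lemma norm_Gc_succ_le {c : ℝ} (hc : 0 < c) (m : ℕ) (t : ℝ) :
    ‖Gc c (m + 1) t‖ ≤ Real.exp c / c ^ m * (c ^ 2 + t ^ 2)⁻¹ := by
  rw [norm_Gc]
  have h1 : c ^ m * (c ^ 2 + t ^ 2) ≤ ‖Sc c t‖ ^ (m + 1 + 1) := by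
    have h2 : c ^ m ≤ ‖Sc c t‖ ^ m := pow_le_pow_left₀ hc.le (c_le_abs_Sc hc t) _
    have h3 : ‖Sc c t‖ ^ (m + 1 + 1) = ‖Sc c t‖ ^ m * (c ^ 2 + t ^ 2) := by
      rw [← abs_Sc_sq c t]; ring
    rw [h3]
    exact mul_le_mul_of_nonneg_right h2 (by positivity)
  have heq : Real.exp c / c ^ m * (c ^ 2 + t ^ 2)⁻¹
      = Real.exp c / (c ^ m * (c ^ 2 + t ^ 2)) := by
    field_simp
  rw [heq]
  apply div_le_div_of_nonneg_left (Real.exp_pos c).le (by positivity) h1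

lemma w_integrable {c : ℝ} (hc : 0 < c) :
    Integrable (fun t : ℝ => (c ^ 2 + t ^ 2)⁻¹) := by
  have h : (fun t : ℝ => (c ^ 2 + t ^ 2)⁻¹)
      = fun t : ℝ => (c ^ 2)⁻¹ * (1 + (t / c) ^ 2)⁻¹ := by
    funext t
    rw [← mul_inv]
    congr 1
    field_simp
  rw [h]
  exact (integrable_inv_one_add_sq.comp_div hc.ne').const_mul _

lemma w_integral {c : ℝ} (hc : 0 < c) :
    ∫ t : ℝ, (c ^ 2 + t ^ 2)⁻¹ = π / c := by
  have h : (fun t : ℝ => (c ^ 2 + t ^ 2)⁻¹)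
      = fun t : ℝ => (c ^ 2)⁻¹ * (1 + (t / c) ^ 2)⁻¹ := by
    funext t; rw [← mul_inv]; congr 1; field_simp
  rw [h, MeasureTheory.integral_const_mul, MeasureTheory.Measure.integral_comp_div
    (fun x : ℝ => (1 + x ^ 2)⁻¹) c, integral_univ_inv_one_add_sq]
  rw [abs_of_pos hc, smul_eq_mul]
  field_simp

lemma Gc_integrable {c : ℝ} (hc : 0 < c) (m : ℕ) : Integrable (Gc c (m + 1)) := by
  refine Integrable.mono ((w_integrable hc).const_mul (Real.exp c / c ^ m))
    (Gc_cont hc _).aestronglyMeasurable (Filter.Eventually.of_forall fun t => ?_)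
  refine (norm_Gc_succ_le hc m t).trans ?_
  rw [Real.norm_eq_abs]
  exact le_abs_self _

lemma Jc_succ_bound {c : ℝ} (hc : 0 < c) (m : ℕ) {T : ℝ} (hT : 0 ≤ T) :
    ‖Jc c (m + 1) T‖ ≤ π * Real.exp c / c ^ (m + 1) := by
  have hle : -T ≤ T := by linarith
  have h1 : ‖Jc c (m + 1) T‖ ≤ ∫ t in (-T)..T, ‖Gc c (m + 1) t‖ :=
    intervalIntegral.norm_integral_le_integral_norm hle
  have h2 : ∫ t in (-T)..T, ‖Gc c (m + 1) t‖
      ≤ ∫ t in (-T)..T, Real.exp c / c ^ m * (c ^ 2 + t ^ 2)⁻¹ := by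
    apply intervalIntegral.integral_mono_on hle
    · exact ((Gc_cont hc _).norm.intervalIntegrable _ _)
    · exact ((w_integrable hc).const_mul _).intervalIntegrable
    · intro t _
      exact norm_Gc_succ_le hc m t
  have h3 : ∫ t in (-T)..T, Real.exp c / c ^ m * (c ^ 2 + t ^ 2)⁻¹
      ≤ Real.exp c / c ^ m * (π / c) := by
    rw [intervalIntegral.integral_const_mul]
    apply mul_le_mul_of_nonneg_left _ (by positivity)
    rw [← w_integral hc]
    rw [intervalIntegral.integral_of_le hle]
    apply setIntegral_le_integral (w_integrable hc)
    filter_upwards with t using by positivity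
  calc ‖Jc c (m + 1) T‖ ≤ Real.exp c / c ^ m * (π / c) := le_trans h1 (le_trans h2 h3)
    _ = π * Real.exp c / c ^ (m + 1) := by rw [pow_succ]; field_simp

lemma hasDerivAt_Gc {c : ℝ} (hc : 0 < c) (n : ℕ) (t : ℝ) :
    HasDerivAt (Gc c n)
      (Complex.I * Complex.exp (Sc c t) / (Sc c t) ^ (n + 1)
        - ((n : ℂ) + 1) * Complex.I * Complex.exp (Sc c t) / (Sc c t) ^ (n + 2)) t := by
  have hS : HasDerivAt (fun t : ℝ => Sc c t) Complex.I t := by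
    have h : HasDerivAt (fun t : ℝ => (t : ℂ)) 1 t := by
      simpa using (hasDerivAt_id t).ofReal_comp
    simpa [Sc] using (h.const_mul Complex.I).const_add ((c : ℂ))
  have hu : HasDerivAt (fun t : ℝ => Complex.exp (Sc c t)) (Complex.exp (Sc c t) * Complex.I) t :=
    hS.cexp
  have hv : HasDerivAt (fun t : ℝ => (Sc c t) ^ (n + 1))
      (((n : ℂ) + 1) * (Sc c t) ^ n * Complex.I) t := by
    induction n with
    | zero => simpa using hS
    | succ k ih =>
      have h2 := ih.mul hS
      have h3 : (fun t : ℝ => Sc c t ^ (k + 1) * Sc c t) = fun t : ℝ => Sc c t ^ (k + 1 + 1) := by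
        funext u; ring
      simp only [Pi.mul_def] at h2
      rw [h3] at h2
      refine h2.congr_deriv ?_
      push_cast
      ring
  have hne : (Sc c t) ^ (n + 1) ≠ 0 := pow_ne_zero _ (Sc_ne hc t)
  have := hu.div hv hne
  refine this.congr_deriv ?_
  have hs := Sc_ne hc t
  field_simp
  ring

lemma rel_Jc {c : ℝ} (hc : 0 < c) (n : ℕ) (T : ℝ) :
    Complex.I * Jc c n T - ((n : ℂ) + 1) * Complex.I * Jc c (n + 1) T
      = Gc c n T - Gc c n (-T) := by
  have hD : (fun t : ℝ => Complex.I * Complex.exp (Sc c t) / (Sc c t) ^ (n + 1)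
      - ((n : ℂ) + 1) * Complex.I * Complex.exp (Sc c t) / (Sc c t) ^ (n + 2))
      = fun t : ℝ => Complex.I * Gc c n t - ((n : ℂ) + 1) * Complex.I * Gc c (n + 1) t := by
    funext t
    rw [Gc, Gc]
    ring
  have h := intervalIntegral.integral_eq_sub_of_hasDerivAt
    (f := Gc c n) (a := -T) (b := T) (fun t _ => hasDerivAt_Gc hc n t) ?_
  · rw [hD] at h
    rw [← h, intervalIntegral.integral_sub, intervalIntegral.integral_const_mul,
      intervalIntegral.integral_const_mul]
    · rfl
    · exact (continuous_const.mul (Gc_cont hc n)).intervalIntegrable _ _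
    · exact (continuous_const.mul (Gc_cont hc (n + 1))).intervalIntegrable _ _
  · rw [hD]
    exact ((continuous_const.mul (Gc_cont hc n)).sub
      (continuous_const.mul (Gc_cont hc (n + 1)))).intervalIntegrable _ _

lemma tendsto_Gc_atTop {c : ℝ} (hc : 0 < c) (n : ℕ) :
    Tendsto (fun T : ℝ => Gc c n T) atTop (𝓝 0) := by
  have hb : Tendsto (fun T : ℝ => Real.exp c / T) atTop (𝓝 0) :=
    tendsto_const_nhds.div_atTop tendsto_id
  apply squeeze_zero_norm' _ hb
  filter_upwards [eventually_ge_atTop (1:ℝ)] with T hT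
  rw [norm_Gc]
  have h1 : T ≤ ‖Sc c T‖ := le_trans (le_abs_self T) (t_le_abs_Sc c T)
  have h2 : T ≤ ‖Sc c T‖ ^ (n + 1) := by
    calc T ≤ ‖Sc c T‖ := h1
      _ ≤ ‖Sc c T‖ ^ (n + 1) := le_self_pow₀ (le_trans hT h1) (Nat.succ_ne_zero n)
  exact div_le_div_of_nonneg_left (Real.exp_pos c).le (by linarith) h2

lemma tendsto_Gc_neg_atTop {c : ℝ} (hc : 0 < c) (n : ℕ) :
    Tendsto (fun T : ℝ => Gc c n (-T)) atTop (𝓝 0) := by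
  have hb : Tendsto (fun T : ℝ => Real.exp c / T) atTop (𝓝 0) :=
    tendsto_const_nhds.div_atTop tendsto_id
  apply squeeze_zero_norm' _ hb
  filter_upwards [eventually_ge_atTop (1:ℝ)] with T hT
  rw [norm_Gc]
  have h1 : T ≤ ‖Sc c (-T)‖ := by
    have := t_le_abs_Sc c (-T)
    rwa [abs_neg, abs_of_pos (by linarith)] at this
  have h2 : T ≤ ‖Sc c (-T)‖ ^ (n + 1) := by
    calc T ≤ ‖Sc c (-T)‖ := h1
      _ ≤ ‖Sc c (-T)‖ ^ (n + 1) := le_self_pow₀ (le_trans hT h1) (Nat.succ_ne_zero n)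
  exact div_le_div_of_nonneg_left (Real.exp_pos c).le (by linarith) h2

lemma Jc_succ_formula {c : ℝ} (hc : 0 < c) (n : ℕ) (T : ℝ) :
    Jc c (n + 1) T
      = (Jc c n T + Complex.I * (Gc c n T - Gc c n (-T))) / ((n : ℂ) + 1) := by
  have h := rel_Jc hc n T
  have hne : ((n : ℂ) + 1) ≠ 0 := Nat.cast_add_one_ne_zero n
  rw [eq_div_iff hne]
  linear_combination Complex.I * h +
    (((n : ℂ) + 1) * Jc c (n + 1) T - Jc c n T) * Complex.I_sq

lemma tendsto_Jc_one {c : ℝ} (hc : 0 < c) :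
    Tendsto (Jc c 1) atTop (𝓝 (2 * (π : ℂ))) := by
  have h := intervalIntegral_tendsto_integral (Gc_integrable hc 0)
    tendsto_neg_atTop_atBot tendsto_id
  have hval : ∫ t : ℝ, Gc c 1 t = 2 * (π : ℂ) := by
    have := aux_J2 c hc
    simpa [Gc, Sc] using this
  rw [hval] at h
  exact h

lemma tendsto_Jc {c : ℝ} (hc : 0 < c) (n : ℕ) :
    Tendsto (Jc c n) atTop (𝓝 (2 * (π : ℂ) / (n.factorial : ℂ))) := by
  induction n with
  | zero =>
    have h1 := tendsto_Jc_one hc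
    have hb := (tendsto_Gc_atTop hc 0).sub (tendsto_Gc_neg_atTop hc 0)
    have hform : ∀ T : ℝ, Jc c 0 T
        = Jc c 1 T - Complex.I * (Gc c 0 T - Gc c 0 (-T)) := by
      intro T
      have := Jc_succ_formula hc 0 T
      simp only [Nat.cast_zero, zero_add, div_one] at this
      rw [this]
      ring
    rw [show (Nat.factorial 0 : ℂ) = 1 by norm_num]
    have := h1.sub ((hb.const_mul Complex.I))
    simp only [mul_zero, sub_zero] at this
    refine Tendsto.congr (fun T => (hform T).symm) ?_
    simpa using this
  | succ n ih =>
    have hb := (tendsto_Gc_atTop hc n).sub (tendsto_Gc_neg_atTop hc n)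
    have := (ih.add (hb.const_mul Complex.I)).div_const ((n : ℂ) + 1)
    have hfac : ((n.factorial : ℂ)) ≠ 0 := by
      exact_mod_cast Nat.factorial_ne_zero n
    have hne : ((n : ℂ) + 1) ≠ 0 := Nat.cast_add_one_ne_zero n
    have hval : (2 * (π:ℂ) / (n.factorial : ℂ) + Complex.I * (0 - 0)) / ((n : ℂ) + 1)
        = 2 * (π : ℂ) / ((n + 1).factorial : ℂ) := by
      simp only [sub_zero, mul_zero, add_zero]
      rw [Nat.factorial_succ]
      push_cast
      rw [div_div, mul_comm ((n.factorial : ℂ)) _]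
    refine Tendsto.congr (fun T => (Jc_succ_formula hc n T).symm) (hval ▸ this)

lemma Jc_zero_bound {c : ℝ} (hc : 0 < c) {T : ℝ} (hT : 0 ≤ T) :
    ‖Jc c 0 T‖ ≤ π * Real.exp c / c + 2 * Real.exp c / c := by
  have hform : Jc c 0 T = Jc c 1 T - Complex.I * (Gc c 0 T - Gc c 0 (-T)) := by
    have := Jc_succ_formula hc 0 T
    simp only [Nat.cast_zero, zero_add, div_one] at this
    rw [this]; ring
  rw [hform]
  have h1 : ‖Jc c 1 T‖ ≤ π * Real.exp c / c := by
    simpa using Jc_succ_bound hc 0 hT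
  have h2 : ∀ t : ℝ, ‖Gc c 0 t‖ ≤ Real.exp c / c := fun t => by
    simpa using norm_Gc_le hc 0 t
  calc ‖Jc c 1 T - Complex.I * (Gc c 0 T - Gc c 0 (-T))‖
      ≤ ‖Jc c 1 T‖ + ‖Complex.I * (Gc c 0 T - Gc c 0 (-T))‖ := norm_sub_le _ _
    _ ≤ π * Real.exp c / c + 2 * Real.exp c / c := by
        apply add_le_add h1
        rw [norm_mul, Complex.norm_I, one_mul]
        calc ‖Gc c 0 T - Gc c 0 (-T)‖ ≤ ‖Gc c 0 T‖ + ‖Gc c 0 (-T)‖ := norm_sub_le _ _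
          _ ≤ Real.exp c / c + Real.exp c / c := add_le_add (h2 T) (h2 (-T))
          _ = 2 * Real.exp c / c := by ring

lemma Jc_bound {c : ℝ} (hc : 0 < c) (n : ℕ) {T : ℝ} (hT : 0 ≤ T) :
    ‖Jc c n T‖ ≤ (π + 2) * Real.exp c * (1 + 1 / c) / c ^ n := by
  match n with
  | 0 =>
    refine (Jc_zero_bound hc hT).trans ?_
    rw [pow_zero, div_one]
    have hpi : (0:ℝ) < π := Real.pi_pos
    have he : (0:ℝ) < Real.exp c := Real.exp_pos c
    rw [← add_div, ← add_mul, mul_comm]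
    have : (π + 2) * Real.exp c * (1 / c) ≤ (π + 2) * Real.exp c * (1 + 1 / c) := by
      apply mul_le_mul_of_nonneg_left _ (by positivity)
      have : (0:ℝ) < 1 / c := by positivity
      linarith
    calc Real.exp c * (π + 2) / c = (π + 2) * Real.exp c * (1 / c) := by ring
      _ ≤ (π + 2) * Real.exp c * (1 + 1 / c) := this
      _ = Real.exp c * (π + 2) * (1 + 1 / c) := by ring
  | m + 1 =>
    refine (Jc_succ_bound hc m hT).trans ?_
    have hnum : π * Real.exp c ≤ (π + 2) * Real.exp c * (1 + 1 / c) := by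
      have h1 : (π:ℝ) ≤ (π + 2) * (1 + 1 / c) := by
        nlinarith [Real.pi_pos, (by positivity : (0:ℝ) < 1 / c)]
      calc π * Real.exp c ≤ ((π + 2) * (1 + 1 / c)) * Real.exp c :=
            mul_le_mul_of_nonneg_right h1 (Real.exp_pos c).le
        _ = (π + 2) * Real.exp c * (1 + 1 / c) := by ring
    gcongr

lemma swap_lemma (f : ℕ → ℂ) (z : ℂ) {c : ℝ} (hc : 0 < c)
    (hsum : Summable (fun n : ℕ => ‖f n‖ * (‖z‖ / c) ^ n)) {T : ℝ} (hT : 0 ≤ T) :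
    ∫ t in (-T)..T, (Complex.exp (Sc c t) / Sc c t) * ∑' n : ℕ, f n * (z / Sc c t) ^ n
      = ∑' n : ℕ, f n * z ^ n * Jc c n T := by
  have hle : -T ≤ T := by linarith
  have hpt : ∀ t : ℝ, (Complex.exp (Sc c t) / Sc c t) * ∑' n : ℕ, f n * (z / Sc c t) ^ n
      = ∑' n : ℕ, f n * z ^ n * Gc c n t := by
    intro t
    rw [← tsum_mul_left]
    apply tsum_congr
    intro n
    have hs := Sc_ne hc t
    rw [Gc, div_pow]
    field_simp
    ring
  calc ∫ t in (-T)..T, (Complex.exp (Sc c t) / Sc c t) * ∑' n : ℕ, f n * (z / Sc c t) ^ n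
      = ∫ t in Ioc (-T) T, ∑' n : ℕ, f n * z ^ n * Gc c n t := by
        rw [intervalIntegral.integral_of_le hle]
        exact setIntegral_congr_fun measurableSet_Ioc (fun t _ => hpt t)
    _ = ∑' n : ℕ, ∫ t in Ioc (-T) T, f n * z ^ n * Gc c n t := by
        rw [← MeasureTheory.integral_tsum_of_summable_integral_norm ?hint ?hsum]
        case hint =>
          intro n
          exact (continuous_const.mul (Gc_cont hc n)).integrableOn_Ioc
        case hsum =>
          have hsum' : Summable (fun n : ℕ => ‖f n‖ * ‖z‖ ^ n * (Real.exp c / c ^ (n + 1)) * (2 * T)) := by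
            apply Summable.congr (hsum.mul_left (2 * T * Real.exp c / c))
            intro n
            rw [div_pow]
            field_simp
            ring
          apply Summable.of_nonneg_of_le
            (fun n => integral_nonneg (fun t => norm_nonneg _)) (fun n => ?_) hsum'
          have hbnd : ∀ t ∈ Ioc (-T) T, ‖f n * z ^ n * Gc c n t‖
              ≤ ‖f n‖ * ‖z‖ ^ n * (Real.exp c / c ^ (n + 1)) := by
            intro t _
            rw [norm_mul, norm_mul, norm_pow]
            exact mul_le_mul_of_nonneg_left (norm_Gc_le hc n t) (by positivity)
          calc ∫ t in Ioc (-T) T, ‖f n * z ^ n * Gc c n t‖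
              ≤ ∫ _t in Ioc (-T) T, ‖f n‖ * ‖z‖ ^ n * (Real.exp c / c ^ (n + 1)) := by
                apply setIntegral_mono_on
                · exact ((continuous_const.mul (Gc_cont hc n)).integrableOn_Ioc).norm
                · exact integrableOn_const measure_Ioc_lt_top.ne
                · exact measurableSet_Ioc
                · exact hbnd
            _ = ‖f n‖ * ‖z‖ ^ n * (Real.exp c / c ^ (n + 1)) * (2 * T) := by
                rw [setIntegral_const, Real.volume_real_Ioc, smul_eq_mul,
                  max_eq_left (by linarith)]
                ring
    _ = ∑' n : ℕ, f n * z ^ n * Jc c n T := by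
        apply tsum_congr
        intro n
        rw [MeasureTheory.integral_const_mul, Jc, intervalIntegral.integral_of_le hle]


/-- OGF-to-EGF integral formula I: if `∑ ‖f n‖ (‖z‖/c)^n` converges, then
`∑_{n≥0} f_n z^n / n! = lim_{T→∞} (1/(2π)) ∫_{-T}^{T} (e^{c+it}/(c+it)) F(z/(c+it)) dt`,
where `F(w) = ∑_{n≥0} f_n w^n`. -/
theorem ogf_to_egf_integral_formula_I (f : ℕ → ℂ) (c : ℝ) (hc : 0 < c) (z : ℂ)
    (hsum : Summable (fun n : ℕ => ‖f n‖ * (‖z‖ / c) ^ n)) :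
    Tendsto
      (fun T : ℝ =>
        ((2 * Real.pi : ℝ) : ℂ)⁻¹ *
          ∫ t in (-T)..T,
            (Complex.exp ((c : ℂ) + Complex.I * (t : ℂ)) /
                ((c : ℂ) + Complex.I * (t : ℂ))) *
              ∑' n : ℕ, f n * (z / ((c : ℂ) + Complex.I * (t : ℂ))) ^ n)
      atTop (nhds (∑' n : ℕ, f n * z ^ n / n.factorial)) := by
  have hbound_sum : Summable (fun n : ℕ =>
      ‖f n‖ * ‖z‖ ^ n * ((π + 2) * Real.exp c * (1 + 1 / c) / c ^ n)) := by
    apply Summable.congr (hsum.mul_left ((π + 2) * Real.exp c * (1 + 1 / c)))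
    intro n
    rw [div_pow]
    field_simp
  have hkey : Tendsto (fun T : ℝ => ∑' n : ℕ, f n * z ^ n * Jc c n T) atTop
      (𝓝 (∑' n : ℕ, f n * z ^ n * (2 * (π : ℂ) / (n.factorial : ℂ)))) := by
    apply tendsto_tsum_of_dominated_convergence hbound_sum
    · intro n
      exact (tendsto_Jc hc n).const_mul (f n * z ^ n)
    · filter_upwards [eventually_ge_atTop (0:ℝ)] with T hT
      intro n
      rw [norm_mul, norm_mul, norm_pow]
      exact mul_le_mul_of_nonneg_left (Jc_bound hc n hT) (by positivity)
  have hfinal := hkey.const_mul (((2 * Real.pi : ℝ) : ℂ)⁻¹)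
  have hval : ((2 * Real.pi : ℝ) : ℂ)⁻¹ * ∑' n : ℕ, f n * z ^ n * (2 * (π : ℂ) / (n.factorial : ℂ))
      = ∑' n : ℕ, f n * z ^ n / (n.factorial : ℂ) := by
    rw [← tsum_mul_left]
    apply tsum_congr
    intro n
    have hpi : ((2 * Real.pi : ℝ) : ℂ) ≠ 0 := by
      simp [Real.pi_ne_zero]
    have hfac : ((n.factorial : ℕ) : ℂ) ≠ 0 := by
      exact_mod_cast Nat.factorial_ne_zero n
    push_cast at hpi ⊢
    field_simp
  rw [hval] at hfinal
  apply hfinal.congr'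
  filter_upwards [eventually_ge_atTop (0:ℝ)] with T hT
  have := swap_lemma f z hc hsum hT
  rw [show (∫ t in (-T)..T, (Complex.exp (Sc c t) / Sc c t)
      * ∑' n : ℕ, f n * (z / Sc c t) ^ n)
      = ∫ t in (-T)..T, (Complex.exp ((c : ℂ) + Complex.I * (t : ℂ)) /
          ((c : ℂ) + Complex.I * (t : ℂ))) *
            ∑' n : ℕ, f n * (z / ((c : ℂ) + Complex.I * (t : ℂ))) ^ n from rfl] at this
  rw [this]
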